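/- (Knapp example, lower bound.) Let n ≥ 2 and 0 < δ < 1. Define f̂ = χ_{[0,δ]^{n-1}} and u(x', t) = ∫_{ℝ^{n-1}} e^{-πit|ξ|² + 2πi x'·ξ} f̂(ξ) dξ. Then, with c = 1/(40n), for all (x', t) ∈ ℝ^{n-1} × ℝ satisfying |x'_j| ≤ c δ^{-1} for each 1 ≤ j ≤ n-1 and |t| ≤ c δ^{-2}, one has |u(x', t)| ≥ (1/2) δ^{n-1}. In particular |u| ≥ (1/2)δ^{n-1} on a tube of sides ∼ δ^{-1} × ⋯ × δ^{-1} × δ^{-2}. -/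

import Mathlib

open Real MeasureTheory

/-- The solution of the free Schrödinger equation with Fourier data `F`:
`u(x',t) = ∫_{ℝ^{n-1}} e^{-πit|ξ|² + 2πi x'·ξ} F(ξ) dξ`. -/
noncomputable def schrodingerExt (n : ℕ) (F : EuclideanSpace ℝ (Fin (n-1)) → ℂ)
    (x : EuclideanSpace ℝ (Fin (n-1))) (t : ℝ) : ℂ :=
  ∫ ξ : EuclideanSpace ℝ (Fin (n-1)),
    Complex.exp (((-(π * t * ‖ξ‖ ^ 2) + 2 * π * (inner ℝ x ξ : ℝ) : ℝ) : ℂ) * Complex.I) * F ξ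

/-- **Knapp example, lower bound.** For `f̂ = χ_{[0,δ]^{n-1}}` and
`c = 1/(40n)`, one has `|u(x',t)| ≥ (1/2)δ^{n-1}` whenever `|x'_j| ≤ cδ^{-1}` for each `j`
and `|t| ≤ cδ^{-2}`. -/
theorem stmt16 (n : ℕ) (hn : 2 ≤ n) (δ : ℝ) (hδ0 : 0 < δ) (hδ1 : δ < 1)
    (x : EuclideanSpace ℝ (Fin (n-1))) (t : ℝ)
    (hx : ∀ j, |x j| ≤ (1 / (40 * (n : ℝ))) * δ⁻¹)
    (ht : |t| ≤ (1 / (40 * (n : ℝ))) * (δ ^ 2)⁻¹) :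
    (1/2) * δ ^ (n - 1) ≤
      ‖schrodingerExt n
        (fun ξ => Set.indicator (Set.univ.pi fun _ : Fin (n-1) => Set.Icc (0 : ℝ) δ)
          (fun _ => (1 : ℂ)) ξ) x t‖ := by
  classical
  set S : Set (EuclideanSpace ℝ (Fin (n-1))) :=
    WithLp.ofLp ⁻¹' (Set.univ.pi fun _ : Fin (n-1) => Set.Icc (0 : ℝ) δ) with hS
  have hSm : MeasurableSet S :=
    (MeasurableSet.univ_pi fun _ => measurableSet_Icc).preimage (WithLp.measurable_ofLp _ _)
  have hScomp : IsCompact S :=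
    (PiLp.homeomorph 2 _).isCompact_preimage.2 (isCompact_univ_pi fun _ => isCompact_Icc)
  set φ : EuclideanSpace ℝ (Fin (n-1)) → ℝ :=
    fun ξ => -(π * t * ‖ξ‖ ^ 2) + 2 * π * (inner ℝ x ξ : ℝ) with hφ
  have hφc : Continuous φ := by
    apply Continuous.add
    · exact (continuous_const.mul (continuous_norm.pow 2)).neg
    · exact continuous_const.mul (continuous_const.inner continuous_id)
  set g : EuclideanSpace ℝ (Fin (n-1)) → ℂ :=
    fun ξ => Complex.exp (((φ ξ : ℝ) : ℂ) * Complex.I) with hg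
  have hgc : Continuous g :=
    Complex.continuous_exp.comp ((Complex.continuous_ofReal.comp hφc).mul continuous_const)
  -- rewrite u as a set integral
  have h1 : schrodingerExt n
        (fun ξ => Set.indicator (Set.univ.pi fun _ : Fin (n-1) => Set.Icc (0 : ℝ) δ)
          (fun _ => (1 : ℂ)) ξ) x t = ∫ ξ in S, g ξ := by
    rw [schrodingerExt, ← integral_indicator hSm]
    congr 1
    ext ξ
    by_cases h : ξ ∈ S
    · rw [Set.indicator_of_mem (show WithLp.ofLp ξ ∈ Set.univ.pi fun _ : Fin (n-1) =>
        Set.Icc (0 : ℝ) δ from h), Set.indicator_of_mem h, mul_one]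
    · rw [Set.indicator_of_notMem (show WithLp.ofLp ξ ∉ Set.univ.pi fun _ : Fin (n-1) =>
        Set.Icc (0 : ℝ) δ from h), Set.indicator_of_notMem h, mul_zero]
  -- volume of S
  have hvol : volume S = ENNReal.ofReal (δ ^ (n-1)) := by
    have := (EuclideanSpace.volume_preserving_symm_measurableEquiv_toLp (Fin (n-1))).measure_preimage
      (s := Set.univ.pi fun _ : Fin (n-1) => Set.Icc (0 : ℝ) δ)
      (MeasurableSet.univ_pi fun _ => measurableSet_Icc).nullMeasurableSet
    have hpre : (MeasurableEquiv.toLp 2 (Fin (n-1) → ℝ)).symm ⁻¹'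
        (Set.univ.pi fun _ : Fin (n-1) => Set.Icc (0 : ℝ) δ) = S := rfl
    rw [hpre] at this
    rw [this, volume_pi_pi]
    simp [Real.volume_Icc, hδ0.le, ← ENNReal.ofReal_pow]
  have hvolS : volume S ≠ ⊤ := by rw [hvol]; exact ENNReal.ofReal_ne_top
  have hvolSr : (volume S).toReal = δ ^ (n-1) := by
    rw [hvol, ENNReal.toReal_ofReal (by positivity)]
  -- integrability
  have hInt : IntegrableOn g S := hgc.continuousOn.integrableOn_compact hScomp
  -- pointwise phase bound
  have hphase : ∀ ξ ∈ S, |φ ξ| ≤ 1 := by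
    intro ξ hξ
    have hξj : ∀ j, ξ j ∈ Set.Icc (0:ℝ) δ := fun j => hξ j (Set.mem_univ j)
    have hnormsq : ‖ξ‖ ^ 2 ≤ (n-1 : ℕ) * δ ^ 2 := by
      rw [EuclideanSpace.norm_eq, Real.sq_sqrt (by positivity)]
      calc ∑ j, ‖ξ j‖ ^ 2 ≤ ∑ _j : Fin (n-1), δ ^ 2 :=
            Finset.sum_le_sum fun j _ => by
              have := hξj j
              rw [Real.norm_eq_abs, sq_abs]
              nlinarith [this.1, this.2]
        _ = (n-1 : ℕ) * δ ^ 2 := by simp [mul_comm]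
    have hinner : |(inner ℝ x ξ : ℝ)| ≤ (n-1 : ℕ) * ((1 / (40 * (n : ℝ))) * δ⁻¹ * δ) := by
      rw [PiLp.inner_apply]
      simp only [RCLike.inner_apply, conj_trivial, mul_comm (ξ _) (x _)]
      calc |∑ j, x j * ξ j| ≤ ∑ j, |x j * ξ j| := Finset.abs_sum_le_sum_abs _ _
        _ ≤ ∑ _j : Fin (n-1), (1 / (40 * (n : ℝ))) * δ⁻¹ * δ := by
            apply Finset.sum_le_sum
            intro j _
            rw [abs_mul]
            have h2 : |ξ j| ≤ δ := by
              have := hξj j; rw [abs_of_nonneg this.1]; exact this.2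
            exact mul_le_mul (hx j) h2 (abs_nonneg _) (by positivity)
        _ = (n-1 : ℕ) * ((1 / (40 * (n : ℝ))) * δ⁻¹ * δ) := by simp [mul_comm]
    have hδne : δ ≠ 0 := hδ0.ne'
    have hmn : ((n-1 : ℕ) : ℝ) ≤ (n : ℝ) := by exact_mod_cast Nat.sub_le n 1
    have hn0 : (0:ℝ) < (n : ℝ) := by positivity
    have hc : ((n-1 : ℕ) : ℝ) * (1 / (40 * (n : ℝ))) ≤ 1/40 := by
      rw [mul_one_div, div_le_div_iff₀ (by positivity) (by norm_num)]
      nlinarith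
    have hπ : π ≤ 4 := by nlinarith [Real.pi_le_four]
    have hterm1 : |π * t * ‖ξ‖ ^ 2|
        ≤ π * ((1 / (40 * (n : ℝ))) * (δ ^ 2)⁻¹) * ((n-1 : ℕ) * δ ^ 2) := by
      rw [abs_mul, abs_mul, abs_of_nonneg Real.pi_nonneg,
        abs_of_nonneg (by positivity : (0:ℝ) ≤ ‖ξ‖^2)]
      apply mul_le_mul
      · exact mul_le_mul_of_nonneg_left ht Real.pi_nonneg
      · exact hnormsq
      · positivity
      · positivity
    have key : |φ ξ| ≤ π * (((n-1 : ℕ):ℝ) * (1 / (40 * (n : ℝ))))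
        + 2 * π * (((n-1 : ℕ):ℝ) * (1 / (40 * (n : ℝ)))) := by
      calc |φ ξ| = |-(π * t * ‖ξ‖ ^ 2) + 2 * π * (inner ℝ x ξ : ℝ)| := rfl
        _ ≤ |π * t * ‖ξ‖ ^ 2| + 2 * π * |(inner ℝ x ξ : ℝ)| := by
            calc _ ≤ |-(π * t * ‖ξ‖ ^ 2)| + |2 * π * (inner ℝ x ξ : ℝ)| := abs_add_le _ _
              _ = _ := by
                rw [abs_neg, abs_mul (2*π), abs_of_nonneg (by positivity : (0:ℝ) ≤ 2*π)]
        _ ≤ π * ((1 / (40 * (n : ℝ))) * (δ ^ 2)⁻¹) * ((n-1 : ℕ) * δ ^ 2)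
            + 2 * π * ((n-1 : ℕ) * ((1 / (40 * (n : ℝ))) * δ⁻¹ * δ)) := by
            gcongr
        _ = π * (((n-1 : ℕ):ℝ) * (1 / (40 * (n : ℝ))))
            + 2 * π * (((n-1 : ℕ):ℝ) * (1 / (40 * (n : ℝ)))) := by
            field_simp
    calc |φ ξ| ≤ π * (((n-1:ℕ):ℝ) * (1 / (40 * (n : ℝ))))
          + 2 * π * (((n-1:ℕ):ℝ) * (1 / (40 * (n : ℝ)))) := key
      _ = 3 * π * (((n-1:ℕ):ℝ) * (1 / (40 * (n : ℝ)))) := by ring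
      _ ≤ 3 * 4 * (1/40) := by
          apply mul_le_mul (by nlinarith [Real.pi_nonneg]) hc (by positivity) (by norm_num)
      _ ≤ 1 := by norm_num
  -- lower bound for cosine
  have hcosr : ∀ r : ℝ, |r| ≤ 1 → (1/2:ℝ) ≤ Real.cos r := by
    intro r hr
    obtain ⟨hr1, hr2⟩ := abs_le.mp hr
    nlinarith [Real.one_sub_sq_div_two_le_cos (x := r)]
  have hcos : ∀ ξ ∈ S, (1/2 : ℝ) ≤ Real.cos (φ ξ) :=
    fun ξ hξ => hcosr _ (hphase ξ hξ)
  -- conclusion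
  rw [h1]
  have hre : (∫ ξ in S, g ξ).re = ∫ ξ in S, Real.cos (φ ξ) := by
    rw [← RCLike.re_to_complex, ← integral_re hInt]
    congr 1
    ext ξ
    simp [hg, RCLike.re_to_complex, Complex.exp_ofReal_mul_I_re]
  have hlow : (1/2) * δ ^ (n-1) ≤ ∫ ξ in S, Real.cos (φ ξ) := by
    have hconst : ∫ _ξ in S, (1/2 : ℝ) = (1/2) * δ ^ (n-1) := by
      rw [setIntegral_const, Measure.real_def, hvolSr, smul_eq_mul, mul_comm]
    rw [← hconst]
    apply setIntegral_mono_on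
    · exact integrableOn_const hvolS
    · exact (Real.continuous_cos.comp hφc).continuousOn.integrableOn_compact hScomp
    · exact hSm
    · exact hcos
  calc (1/2) * δ ^ (n-1) ≤ (∫ ξ in S, g ξ).re := hre ▸ hlow
    _ ≤ ‖∫ ξ in S, g ξ‖ := Complex.re_le_norm _
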